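/- Let a, c ≥ 1 be integers and let d be a positive integer. A pair (x₁, y₁) ∈ ℤ² satisfies x₁² − d·y₁² = 4a²c² and x₁ ≡ 2ac (mod d) if and only if there exist a nonzero squarefree integer α (possibly negative) dividing 2ac and integers p, q such that α·p² − α·d·q² = 4ac, x₁ = 2ac + α·d·q², and y₁ = α·p·q. -/
import Mathlib

lemma int_sq_mul_squarefree (m : ℤ) (hm : m ≠ 0) :
    ∃ α q : ℤ, q ^ 2 * α = m ∧ Squarefree α ∧ α ≠ 0 ∧ q ≠ 0 := by
  obtain ⟨A, B, hBA, hA⟩ := Nat.sq_mul_squarefree m.natAbs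
  have hA0 : (A : ℤ) ≠ 0 := by
    intro h
    apply hm
    have : A = 0 := by exact_mod_cast h
    subst this
    simpa using Int.natAbs_eq_zero.mp (by omega)
  have hB0 : (B : ℤ) ≠ 0 := by
    intro h
    apply hm
    have : B = 0 := by exact_mod_cast h
    subst this
    exact Int.natAbs_eq_zero.mp (by omega)
  rcases Int.natAbs_eq m with h | h
  · exact ⟨(A : ℤ), (B : ℤ), by rw [h]; exact_mod_cast hBA, Int.squarefree_natCast.2 hA, hA0, hB0⟩
  · refine ⟨-(A : ℤ), (B : ℤ), ?_, ?_, neg_ne_zero.2 hA0, hB0⟩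
    · rw [h]
      have : ((B ^ 2 * A : ℕ) : ℤ) = (m.natAbs : ℤ) := by exact_mod_cast hBA
      push_cast at this
      rw [Int.abs_eq_natAbs] at this; linarith
    · rw [← Int.squarefree_natAbs]
      simpa using Int.squarefree_natAbs.2 (Int.squarefree_natCast.2 hA)

lemma sqf_dvd_half (α a c : ℤ) (hsq : Squarefree α) (h : α ∣ 4 * a * c) :
    α ∣ 2 * a * c :=
  hsq.isRadical 2 (2 * a * c) (h.trans ⟨a * c, by ring⟩)

/-- the parametrization (3.1.26)–(3.1.29) by associated solutions.
Let `a, c ≥ 1` and `d > 0`.  A pair `(x₁, y₁)` satisfies `x₁² − dy₁² = 4a²c²` and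
`x₁ ≡ 2ac (mod d)` if and only if there exist a nonzero squarefree integer `α`
(possibly negative) dividing `2ac` and integers `p, q` with `αp² − αdq² = 4ac`
(i.e. `p² − dq² = 4ac/α`), `x₁ = 2ac + αdq²` and `y₁ = αpq`. -/
theorem associated_solutions_parametrization
    (a c : ℤ) (ha : 1 ≤ a) (hc : 1 ≤ c) (d : ℤ) (hd : 0 < d) (x₁ y₁ : ℤ) :
    (x₁ ^ 2 - d * y₁ ^ 2 = 4 * a ^ 2 * c ^ 2 ∧ d ∣ (x₁ - 2 * a * c)) ↔
      ∃ α p q : ℤ, α ≠ 0 ∧ Squarefree α ∧ α ∣ 2 * a * c ∧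
        α * p ^ 2 - α * d * q ^ 2 = 4 * a * c ∧
        x₁ = 2 * a * c + α * d * q ^ 2 ∧ y₁ = α * p * q := by
  constructor
  · rintro ⟨hx, m, hm⟩
    have key : y₁ ^ 2 = d * m ^ 2 + 4 * a * c * m := by
      have h2 : d * y₁ ^ 2 = d * (d * m ^ 2 + 4 * a * c * m) := by
        linear_combination -hx + (x₁ + 2 * a * c + d * m) * hm
      exact mul_left_cancel₀ hd.ne' h2
    rcases eq_or_ne m 0 with rfl | hm0
    · -- m = 0 : x₁ = 2ac, y₁ = 0
      have hy : y₁ = 0 := by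
        have : y₁ ^ 2 = 0 := by linarith
        exact pow_eq_zero_iff two_ne_zero |>.mp this
      have h4ac : (4 * a * c : ℤ) ≠ 0 := by positivity
      obtain ⟨α, p, hpα, hsq, hα0, hp0⟩ := int_sq_mul_squarefree (4 * a * c) h4ac
      have hdvd4 : α ∣ 4 * a * c := ⟨p ^ 2, by linarith [hpα]⟩
      refine ⟨α, p, 0, hα0, hsq, sqf_dvd_half α a c hsq hdvd4, by linarith [hpα], ?_, by
        simp [hy]⟩
      have : x₁ = 2 * a * c := by linarith [hm]
      simp [this]
    · -- m ≠ 0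
      obtain ⟨α, q, hqα, hsq, hα0, hq0⟩ := int_sq_mul_squarefree m hm0
      have hy2 : y₁ ^ 2 = q ^ 2 * (α * (d * q ^ 2 * α + 4 * a * c)) := by
        rw [key, ← hqα]; ring
      have hqdvd : q ∣ y₁ := by
        rw [← Int.pow_dvd_pow_iff (two_ne_zero)]
        exact ⟨α * (d * q ^ 2 * α + 4 * a * c), hy2⟩
      obtain ⟨t, ht⟩ := hqdvd
      have ht2 : t ^ 2 = α * (d * q ^ 2 * α + 4 * a * c) := by
        have h2 : q ^ 2 * t ^ 2 = q ^ 2 * (α * (d * q ^ 2 * α + 4 * a * c)) := by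
          rw [← hy2, ht]; ring
        exact mul_left_cancel₀ (pow_ne_zero 2 hq0) h2
      have hαt : α ∣ t := hsq.isRadical 2 t ⟨d * q ^ 2 * α + 4 * a * c, ht2⟩
      obtain ⟨p, hp⟩ := hαt
      have hkey : α * p ^ 2 - α * d * q ^ 2 = 4 * a * c := by
        have h2 : α * (α * p ^ 2) = α * (d * q ^ 2 * α + 4 * a * c) := by
          rw [← ht2, hp]; ring
        have := mul_left_cancel₀ hα0 h2
        linarith
      have hdvd4 : α ∣ 4 * a * c := ⟨p ^ 2 - d * q ^ 2, by linarith [hkey]⟩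
      exact ⟨α, p, q, hα0, hsq, sqf_dvd_half α a c hsq hdvd4, hkey,
        by rw [show x₁ = 2 * a * c + d * m by linarith [hm], ← hqα]; ring,
        by rw [ht, hp]; ring⟩
  · rintro ⟨α, p, q, hα0, hsq, hdvd, heq, hx, hy⟩
    constructor
    · rw [hx, hy]; linear_combination (-(α * d * q ^ 2)) * heq
    · exact ⟨α * q ^ 2, by rw [hx]; ring⟩
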